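/- The dimension of the space V = (P^{k−1})^4 ⊕ { p ∈ (P̃^k)^4 : p·x = 0 } of polynomial 1-forms on the pentatope equals k(k+2)(k+3)(k+4)/6, where P^m and P̃^m denote polynomials of degree ≤ m and homogeneous polynomials of degree m in four variables, respectively. -/

import Mathlib

open MvPolynomial Finsupp

set_option synthInstance.maxHeartbeats 1000000
set_option maxHeartbeats 1000000

noncomputable section
namespace AuxPent

/-- Multisets of size m ≃ finsupps of degree m. -/
def symEquiv (n m : ℕ) : Sym (Fin n) m ≃ ↑({d : Fin n →₀ ℕ | d.degree = m}) where
  toFun s := ⟨Multiset.toFinsupp (s : Multiset (Fin n)), by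
    show (Multiset.toFinsupp (s : Multiset (Fin n))).sum (fun _ => id) = m
    rw [Multiset.toFinsupp_sum_eq]; exact s.2⟩
  invFun d := ⟨Finsupp.toMultiset d.1, by
    rw [Finsupp.card_toMultiset]; exact d.2⟩
  left_inv s := by ext : 1; simp
  right_inv d := by ext : 1; simp

instance fintypeDegEq (n m : ℕ) : Fintype ↑({d : Fin n →₀ ℕ | d.degree = m}) :=
  Fintype.ofEquiv _ (symEquiv n m)

lemma card_degEq (n m : ℕ) :
    Fintype.card ↑({d : Fin n →₀ ℕ | d.degree = m}) = (n + m - 1).choose m := by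
  rw [← Fintype.card_congr (symEquiv n m), Sym.card_sym_eq_choose]
  simp

def leEquiv (n m : ℕ) :
    ↑({d : Fin n →₀ ℕ | d.degree ≤ m}) ≃ Σ j : Fin (m+1), ↑({d : Fin n →₀ ℕ | d.degree = (j:ℕ)}) where
  toFun d := ⟨⟨d.1.degree, Nat.lt_succ_of_le d.2⟩, ⟨d.1, rfl⟩⟩
  invFun x := ⟨x.2.1, by
    have h : (x.2.1 : Fin n →₀ ℕ).degree = (x.1 : ℕ) := x.2.2
    show (x.2.1 : Fin n →₀ ℕ).degree ≤ m
    rw [h]; exact Nat.le_of_lt_succ x.1.2⟩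
  left_inv d := rfl
  right_inv x := by
    obtain ⟨⟨j, hj⟩, d, hd⟩ := x
    have h : d.degree = j := hd
    exact Sigma.subtype_ext (Fin.ext (by simpa using h)) rfl

instance fintypeDegLe (n m : ℕ) : Fintype ↑({d : Fin n →₀ ℕ | d.degree ≤ m}) :=
  Fintype.ofEquiv _ (leEquiv n m).symm

lemma card_degLe (m : ℕ) :
    Fintype.card ↑({d : Fin 4 →₀ ℕ | d.degree ≤ m}) = (m + 4).choose 4 := by
  rw [Fintype.card_congr (leEquiv 4 m), Fintype.card_sigma]
  have h1 : ∀ j : Fin (m+1), Fintype.card ↑({d : Fin 4 →₀ ℕ | d.degree = (j:ℕ)})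
      = ((j:ℕ) + 3).choose 3 := by
    intro j
    rw [card_degEq]
    have : (4 + (j:ℕ) - 1) = (j:ℕ) + 3 := by omega
    rw [this, ← Nat.choose_symm (by omega : (j:ℕ) ≤ (j:ℕ)+3)]
    congr 1; omega
  simp_rw [h1]
  rw [Fin.sum_univ_eq_sum_range (fun j => (j + 3).choose 3)]
  have := Nat.sum_Icc_choose (m + 3) 3
  rw [show Finset.Icc 3 (m+3) = Finset.Ico 3 (m+4) by exact (Finset.Ico_add_one_right_eq_Icc (a := 3) (b := m+3)).symm,
    Finset.sum_Ico_eq_sum_range] at this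
  have h2 : m + 4 - 3 = m + 1 := by omega
  rw [h2] at this
  simp_rw [show ∀ i, 3 + i = i + 3 from fun i => by omega] at this
  rw [this]

lemma homog_eq_restrict (n m : ℕ) :
    homogeneousSubmodule (Fin n) ℝ m
      = MvPolynomial.restrictSupport ℝ {d : Fin n →₀ ℕ | d.degree = m} :=
  homogeneousSubmodule_eq_finsupp_supported (σ := Fin n) (R := ℝ) m

instance restrict_fd (n m : ℕ) :
    Module.Finite ℝ (MvPolynomial.restrictSupport ℝ {d : Fin n →₀ ℕ | d.degree = m}) :=
  Module.Finite.of_basis (MvPolynomial.basisRestrictSupport ℝ _)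

instance homog_fd (n m : ℕ) : Module.Finite ℝ (homogeneousSubmodule (Fin n) ℝ m) :=
  Module.Finite.equiv (LinearEquiv.ofEq _ _ (homog_eq_restrict n m)).symm

lemma finrank_homog (m : ℕ) :
    Module.finrank ℝ (homogeneousSubmodule (Fin 4) ℝ m) = (m + 3).choose 3 := by
  have b := MvPolynomial.basisRestrictSupport ℝ {d : Fin 4 →₀ ℕ | d.degree = m}
  have e : homogeneousSubmodule (Fin 4) ℝ m ≃ₗ[ℝ]
      MvPolynomial.restrictSupport ℝ {d : Fin 4 →₀ ℕ | d.degree = m} :=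
    LinearEquiv.ofEq _ _ (homog_eq_restrict 4 m)
  rw [e.finrank_eq, Module.finrank_eq_card_basis b, card_degEq]
  rw [show 4 + m - 1 = m + 3 by omega, ← Nat.choose_symm (by omega : m ≤ m + 3)]
  congr 1; omega

lemma rtd_eq_restrict (m : ℕ) :
    restrictTotalDegree (Fin 4) ℝ m
      = MvPolynomial.restrictSupport ℝ {d : Fin 4 →₀ ℕ | d.degree ≤ m} := rfl

instance rtd_fd (m : ℕ) : Module.Finite ℝ (restrictTotalDegree (Fin 4) ℝ m) :=
  Module.Finite.of_basis (MvPolynomial.basisRestrictSupport ℝ {d : Fin 4 →₀ ℕ | d.degree ≤ m})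

lemma finrank_rtd (m : ℕ) :
    Module.finrank ℝ (restrictTotalDegree (Fin 4) ℝ m) = (m + 4).choose 4 := by
  have b := MvPolynomial.basisRestrictSupport ℝ {d : Fin 4 →₀ ℕ | d.degree ≤ m}
  rw [rtd_eq_restrict, Module.finrank_eq_card_basis b, card_degLe]

/-- A pi submodule is equivalent to the product of the submodules. -/
def piSubEquiv (p : Fin 4 → Submodule ℝ (MvPolynomial (Fin 4) ℝ)) :
    (∀ i, p i) ≃ₗ[ℝ] (Submodule.pi Set.univ p) where
  toFun f := ⟨fun i => f i, fun i _ => (f i).2⟩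
  invFun g i := ⟨g.1 i, g.2 i (Set.mem_univ i)⟩
  map_add' _ _ := rfl
  map_smul' _ _ := rfl
  left_inv f := rfl
  right_inv g := rfl

instance piSub_fd (p : Fin 4 → Submodule ℝ (MvPolynomial (Fin 4) ℝ)) [∀ i, Module.Finite ℝ (p i)] :
    Module.Finite ℝ (Submodule.pi Set.univ p) :=
  Module.Finite.equiv (piSubEquiv p)

lemma finrank_piSub (p : Fin 4 → Submodule ℝ (MvPolynomial (Fin 4) ℝ)) [∀ i, Module.Finite ℝ (p i)] :
    Module.finrank ℝ (Submodule.pi Set.univ p) = ∑ i, Module.finrank ℝ (p i) := by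
  rw [← (piSubEquiv p).finrank_eq, Module.finrank_pi_fintype]

/-- The linear map `b ↦ ∑ i, b i * X i`. -/
def L : (Fin 4 → (MvPolynomial (Fin 4) ℝ)) →ₗ[ℝ] (MvPolynomial (Fin 4) ℝ) :=
  ∑ i : Fin 4, (LinearMap.mulRight ℝ (X i : (MvPolynomial (Fin 4) ℝ))).comp (LinearMap.proj i)

lemma L_apply (b : Fin 4 → (MvPolynomial (Fin 4) ℝ)) : L b = ∑ i, b i * X i := by
  simp [L, LinearMap.sum_apply]

lemma degree_add (a b : Fin 4 →₀ ℕ) : (a + b).degree = a.degree + b.degree := by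
  simp only [Finsupp.degree_eq_weight_one, map_add]

lemma degree_single (i : Fin 4) : (Finsupp.single i 1).degree = 1 := by
  simp only [Finsupp.degree_eq_weight_one]
  simp [Finsupp.weight_apply, Finsupp.sum_single_index]

/-- The image of the degree-k homogeneous tuples under `L` is the degree-(k+1)
homogeneous polynomials. -/
lemma map_L (k : ℕ) :
    Submodule.map L (Submodule.pi Set.univ fun _ : Fin 4 => homogeneousSubmodule (Fin 4) ℝ k)
      = homogeneousSubmodule (Fin 4) ℝ (k + 1) := by
  apply le_antisymm
  · rintro p ⟨b, hb, rfl⟩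
    rw [mem_homogeneousSubmodule, L_apply]
    apply MvPolynomial.IsHomogeneous.sum
    intro i _
    simpa using (hb i (Set.mem_univ i)).mul (isHomogeneous_X ℝ i)
  · intro p hp
    rw [show p = p.support.sum (fun d => monomial d (coeff d p)) from
      (support_sum_monomial_coeff p).symm]
    apply Submodule.sum_mem
    intro d hd
    have hd0 : coeff d p ≠ 0 := MvPolynomial.mem_support_iff.mp hd
    have hdeg : d.degree = k + 1 := by
      have := (mem_homogeneousSubmodule _ _).mp hp hd0
      rwa [Finsupp.degree_eq_weight_one]
    have hdne : d ≠ 0 := by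
      intro h
      rw [h, map_zero] at hdeg
      omega
    obtain ⟨i, hi⟩ : ∃ i, d i ≠ 0 := by
      by_contra h
      push_neg at h
      exact hdne (Finsupp.ext h)
    set d' := d - Finsupp.single i 1 with hd'
    have hle : Finsupp.single i 1 ≤ d := by
      rw [Finsupp.single_le_iff]
      omega
    have hsum : d' + Finsupp.single i 1 = d := tsub_add_cancel_of_le hle
    have hdeg' : d'.degree = k := by
      have := degree_add d' (Finsupp.single i 1)
      rw [hsum, hdeg, degree_single] at this
      omega
    refine ⟨Pi.single i (monomial d' (coeff d p)), ?_, ?_⟩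
    · intro j _
      rcases eq_or_ne j i with rfl | hji
      · rw [Pi.single_eq_same]
        exact isHomogeneous_monomial _ hdeg'
      · rw [Pi.single_eq_of_ne hji]
        exact (homogeneousSubmodule (Fin 4) ℝ k).zero_mem
    · rw [L_apply, Fintype.sum_eq_single i (fun j hji => by
        rw [Pi.single_eq_of_ne hji, zero_mul])]
      rw [Pi.single_eq_same, X, monomial_mul, mul_one, hsum]

def Hsub (k : ℕ) : Submodule ℝ (Fin 4 → (MvPolynomial (Fin 4) ℝ)) :=
  Submodule.pi Set.univ fun _ : Fin 4 => homogeneousSubmodule (Fin 4) ℝ k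

def Bsub (k : ℕ) : Submodule ℝ (Fin 4 → (MvPolynomial (Fin 4) ℝ)) := Hsub k ⊓ LinearMap.ker L

instance (k : ℕ) : Module.Finite ℝ (Hsub k) := piSub_fd _

instance (k : ℕ) : Module.Finite ℝ (Bsub k) :=
  Submodule.finiteDimensional_of_le (inf_le_left : Bsub k ≤ Hsub k)

lemma finrank_B (k : ℕ) :
    (k + 4).choose 3 + Module.finrank ℝ (Bsub k) = 4 * ((k + 3).choose 3) := by
  classical
  set f : Hsub k →ₗ[ℝ] (MvPolynomial (Fin 4) ℝ) := L.domRestrict (Hsub k) with hf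
  have hrange : LinearMap.range f = homogeneousSubmodule (Fin 4) ℝ (k + 1) := by
    rw [hf, LinearMap.range_domRestrict]
    exact map_L k
  have hker : LinearMap.ker f = Submodule.comap (Hsub k).subtype (Bsub k) := by
    rw [hf, LinearMap.ker_domRestrict]
    ext x
    simp only [Submodule.mem_comap, LinearMap.mem_ker, Bsub, Submodule.mem_inf]
    exact ⟨fun h => ⟨x.2, h⟩, fun h => h.2⟩
  have e : (LinearMap.ker f) ≃ₗ[ℝ] (Bsub k) := by
    rw [hker]
    exact Submodule.comapSubtypeEquivOfLe (inf_le_left : Bsub k ≤ Hsub k)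
  have hrn := LinearMap.finrank_range_add_finrank_ker f
  have hkerB : Module.finrank ℝ (LinearMap.ker f) = Module.finrank ℝ (Bsub k) :=
    LinearEquiv.finrank_eq e
  have hrangeB : Module.finrank ℝ (LinearMap.range f) = (k + 4).choose 3 := by
    rw [LinearEquiv.finrank_eq (LinearEquiv.ofEq _ _ hrange), finrank_homog]
  have hH : Module.finrank ℝ (Hsub k) = 4 * ((k + 3).choose 3) := by
    rw [Hsub, finrank_piSub]
    simp [finrank_homog]
  omega

end AuxPent
end

/-- The space `V = (P^{k−1})⁴ ⊕ { p ∈ (P̃^k)⁴ : p·x = 0 }` of polynomial 1-forms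
on the pentatope has dimension `k(k+2)(k+3)(k+4)/6`. -/
theorem dim_one_forms_pentatope (k : ℕ) (hk : 1 ≤ k) :
    ∃ S : Submodule ℝ (Fin 4 → MvPolynomial (Fin 4) ℝ),
      (∀ p, p ∈ S ↔ ∃ a b : Fin 4 → MvPolynomial (Fin 4) ℝ,
        (∀ i, (a i).totalDegree ≤ k - 1) ∧
        (∀ i, b i ∈ homogeneousSubmodule (Fin 4) ℝ k) ∧
        (∑ i, b i * X i) = 0 ∧ p = a + b) ∧
      Module.finrank ℝ S = k * (k + 2) * (k + 3) * (k + 4) / 6 := by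
  classical
  let A : Submodule ℝ (Fin 4 → MvPolynomial (Fin 4) ℝ) :=
    Submodule.pi Set.univ fun _ : Fin 4 => restrictTotalDegree (Fin 4) ℝ (k - 1)
  refine ⟨A ⊔ AuxPent.Bsub k, ?_, ?_⟩
  · intro p
    rw [Submodule.mem_sup]
    constructor
    · rintro ⟨a, ha, b, hb, rfl⟩
      obtain ⟨hb1, hb2⟩ := Submodule.mem_inf.mp hb
      refine ⟨a, b, fun i => (mem_restrictTotalDegree _ _ _).mp (ha i (Set.mem_univ i)),
        fun i => hb1 i (Set.mem_univ i), ?_, rfl⟩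
      rw [← AuxPent.L_apply]
      exact hb2
    · rintro ⟨a, b, ha, hb, hsum, rfl⟩
      refine ⟨a, fun i _ => (mem_restrictTotalDegree _ _ _).mpr (ha i), b,
        Submodule.mem_inf.mpr ⟨fun i _ => hb i, ?_⟩, rfl⟩
      rw [LinearMap.mem_ker, AuxPent.L_apply]
      exact hsum
  · haveI : Module.Finite ℝ A := AuxPent.piSub_fd _
    have hAB : A ⊓ AuxPent.Bsub k = ⊥ := by
      rw [eq_bot_iff]
      rintro x ⟨hx1, hx2⟩
      obtain ⟨hxh, -⟩ := Submodule.mem_inf.mp hx2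
      have hx0 : ∀ i, x i = 0 := by
        intro i
        by_contra h0
        have h1 : (x i).totalDegree = k :=
          (hxh i (Set.mem_univ i)).totalDegree h0
        have h2 : (x i).totalDegree ≤ k - 1 :=
          (mem_restrictTotalDegree _ _ _).mp (hx1 i (Set.mem_univ i))
        omega
      simp only [Submodule.mem_bot]
      funext i
      exact hx0 i
    have hsup := Submodule.finrank_sup_add_finrank_inf_eq A (AuxPent.Bsub k)
    rw [hAB, finrank_bot, add_zero] at hsup
    have hA : Module.finrank ℝ A = 4 * ((k + 3).choose 4) := by
      show Module.finrank ℝ (Submodule.pi Set.univ _) = _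
      rw [AuxPent.finrank_piSub]
      simp [AuxPent.finrank_rtd, show k - 1 + 4 = k + 3 by omega]
    have hB := AuxPent.finrank_B k
    rw [hsup, hA]
    -- arithmetic
    have F1 : 24 * ((k + 3).choose 4) = k * (k + 1) * (k + 2) * (k + 3) := by
      have h := Nat.descFactorial_eq_factorial_mul_choose (k + 3) 4
      rw [show Nat.factorial 4 = 24 from rfl] at h
      rw [← h]
      rw [Nat.descFactorial_succ, Nat.descFactorial_succ, Nat.descFactorial_succ,
        Nat.descFactorial_succ, Nat.descFactorial_zero]
      rw [show k + 3 - 3 = k from by omega, show k + 3 - 2 = k + 1 from by omega,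
        show k + 3 - 1 = k + 2 from by omega, show k + 3 - 0 = k + 3 from by omega]
      ring
    have F2 : 6 * ((k + 3).choose 3) = (k + 1) * (k + 2) * (k + 3) := by
      have h := Nat.descFactorial_eq_factorial_mul_choose (k + 3) 3
      rw [show Nat.factorial 3 = 6 from rfl] at h
      rw [← h]
      rw [Nat.descFactorial_succ, Nat.descFactorial_succ, Nat.descFactorial_succ,
        Nat.descFactorial_zero]
      rw [show k + 3 - 2 = k + 1 from by omega, show k + 3 - 1 = k + 2 from by omega,
        show k + 3 - 0 = k + 3 from by omega]
      ring
    have F3 : 6 * ((k + 4).choose 3) = (k + 2) * (k + 3) * (k + 4) := by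
      have h := Nat.descFactorial_eq_factorial_mul_choose (k + 4) 3
      rw [show Nat.factorial 3 = 6 from rfl] at h
      rw [← h]
      rw [Nat.descFactorial_succ, Nat.descFactorial_succ, Nat.descFactorial_succ,
        Nat.descFactorial_zero]
      rw [show k + 4 - 2 = k + 2 from by omega, show k + 4 - 1 = k + 3 from by omega,
        show k + 4 - 0 = k + 4 from by omega]
      ring
    have key : k * (k + 2) * (k + 3) * (k + 4) + (k + 2) * (k + 3) * (k + 4)
        = k * (k + 1) * (k + 2) * (k + 3) + 4 * ((k + 1) * (k + 2) * (k + 3)) := by ring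
    rw [← F1, ← F2, ← F3] at key
    refine (Nat.div_eq_of_eq_mul_left (by norm_num) ?_).symm
    generalize hN : k * (k + 2) * (k + 3) * (k + 4) = N at key
    omega
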